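/- arXiv:1810.04233 — 2 statements merged into one kernel-verified Lean document; each statement's English description precedes it below -/
import Mathlib

section
/- Let n ≥ 1 and consider 2n qudit registers L₁,...,Lₙ, R₁,...,Rₙ, where each pair (Lᵢ,Rᵢ) is in the maximally entangled state |epr_d⟩. Suppose Bell basis measurements are performed on the pairs (R₁,L₂),(R₂,L₃),...,(R_{n−1},Lₙ), yielding post-measurement states (X^{xᵢ}⊗Z^{yᵢ})|epr_d⟩ on the i-th pair. Let x = Σᵢxᵢ and y = Σᵢyᵢ (sums in ℤ_d). Then the post-measurement state of the remaining pair (L₁,Rₙ) is (X^x ⊗ Z^{−y})|epr_d⟩. -/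
open Finset

noncomputable def ωc (d : ℕ) : ℂ := Complex.exp (2 * Real.pi * Complex.I / d)

noncomputable def χ (d : ℕ) [NeZero d] (a : ZMod d) : ℂ := ωc d ^ a.val

noncomputable def epr (d : ℕ) [NeZero d] (x' y' i j : ZMod d) : ℂ :=
  if i = j + x' then ((Real.sqrt d : ℂ))⁻¹ * ωc d ^ (y' * j).val else 0

lemma ωc_pow_d (d : ℕ) [NeZero d] : ωc d ^ d = 1 := by
  have hd : (d : ℂ) ≠ 0 := Nat.cast_ne_zero.mpr (NeZero.ne d)
  rw [ωc, ← Complex.exp_nat_mul]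
  rw [show (d : ℂ) * (2 * Real.pi * Complex.I / d) = 2 * Real.pi * Complex.I by
    field_simp]
  exact Complex.exp_two_pi_mul_I

lemma χ_add (d : ℕ) [NeZero d] (a b : ZMod d) : χ d (a + b) = χ d a * χ d b := by
  rw [χ, χ, χ, ← pow_add, ZMod.val_add]
  conv_rhs => rw [← Nat.mod_add_div (a.val + b.val) d, pow_add, pow_mul, ωc_pow_d,
    one_pow, mul_one]

lemma χ_zero (d : ℕ) [NeZero d] : χ d 0 = 1 := by simp [χ]

lemma χ_ne_zero (d : ℕ) [NeZero d] (a : ZMod d) : χ d a ≠ 0 :=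
  pow_ne_zero _ (Complex.exp_ne_zero _)

lemma χ_neg (d : ℕ) [NeZero d] (a : ZMod d) : χ d (-a) = (χ d a)⁻¹ := by
  have h : χ d a * χ d (-a) = 1 := by rw [← χ_add]; simp [χ_zero]
  field_simp [χ_ne_zero] at h ⊢
  linear_combination h

lemma conj_χ (d : ℕ) [NeZero d] (a : ZMod d) :
    (starRingEnd ℂ) (χ d a) = χ d (-a) := by
  rw [χ, map_pow, χ_neg, χ, ← inv_pow]
  congr 1
  rw [ωc, ← Complex.exp_conj, ← Complex.exp_neg]
  congr 1
  simp [map_div₀, Complex.conj_I, map_ofNat]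
  ring

lemma χ_prod (d : ℕ) [NeZero d] {ι : Type*} (s : Finset ι) (f : ι → ZMod d) :
    ∏ i ∈ s, χ d (f i) = χ d (∑ i ∈ s, f i) := by
  classical
  induction s using Finset.cons_induction with
  | empty => simp [χ_zero]
  | cons a s ha ih => rw [prod_cons, sum_cons, χ_add, ih]

lemma sqrtd_ne_zero (d : ℕ) [NeZero d] : ((Real.sqrt d : ℝ) : ℂ) ≠ 0 := by
  have : (0:ℝ) < Real.sqrt d := Real.sqrt_pos.mpr (by
    exact_mod_cast Nat.pos_of_ne_zero (NeZero.ne d))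
  exact_mod_cast this.ne'

section chain

variable {d m : ℕ} [NeZero d]

noncomputable def lam0 (x : Fin m → ZMod d) (b : ZMod d) (i : Fin m) : ZMod d :=
  b + ∑ j ∈ univ.filter (fun j : Fin m => (i : ℕ) < (j : ℕ)), x j

noncomputable def rho0 (x : Fin m → ZMod d) (b : ZMod d) (i : Fin m) : ZMod d :=
  b + ∑ j ∈ univ.filter (fun j : Fin m => (i : ℕ) ≤ (j : ℕ)), x j

lemma filter_le_eq_insert (i : Fin m) :
    univ.filter (fun j : Fin m => (i : ℕ) ≤ (j : ℕ))
      = insert i (univ.filter (fun j : Fin m => (i : ℕ) < (j : ℕ))) := by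
  ext k
  simp only [mem_filter, mem_univ, true_and, mem_insert, Fin.ext_iff]
  omega

lemma rho0_eq (x : Fin m → ZMod d) (b : ZMod d) (i : Fin m) :
    rho0 x b i = lam0 x b i + x i := by
  rw [rho0, lam0, filter_le_eq_insert, sum_insert (by simp)]
  ring

lemma cases_lam0 (x : Fin m → ZMod d) (a b : ZMod d) (h : a = b + ∑ i, x i)
    (j : Fin (m + 1)) :
    Fin.cases (motive := fun _ => ZMod d) a (lam0 x b) j
      = b + ∑ k ∈ univ.filter (fun k : Fin m => (j : ℕ) ≤ (k : ℕ)), x k := by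
  induction j using Fin.cases with
  | zero => simpa using h
  | succ i =>
      rw [Fin.cases_succ, lam0]
      have hf : univ.filter (fun k : Fin m => ((i.succ : Fin (m+1)) : ℕ) ≤ (k : ℕ))
          = univ.filter (fun k : Fin m => (i : ℕ) < (k : ℕ)) := by
        ext k
        simp only [mem_filter, mem_univ, true_and, Fin.val_succ]
        omega
      rw [hf]

lemma lastCases_rho0 (x : Fin m → ZMod d) (b : ZMod d) (j : Fin (m + 1)) :
    Fin.lastCases (motive := fun _ => ZMod d) b (rho0 x b) j
      = b + ∑ k ∈ univ.filter (fun k : Fin m => (j : ℕ) ≤ (k : ℕ)), x k := by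
  induction j using Fin.lastCases with
  | last =>
      rw [Fin.lastCases_last]
      rw [Finset.filter_false_of_mem (fun k _ => by
        simp only [Fin.val_last, not_le]; exact k.isLt)]
      simp
  | cast i =>
      rw [Fin.lastCases_castSucc, rho0]
      simp [Fin.coe_castSucc]

lemma key_forward (x : Fin m → ZMod d) (a b : ZMod d) (ρ lam : Fin m → ZMod d)
    (h1 : ∀ i, ρ i = lam i + x i)
    (h2 : ∀ j : Fin (m + 1), Fin.cases (motive := fun _ => ZMod d) a lam j
      = Fin.lastCases (motive := fun _ => ZMod d) b ρ j) :
    a = b + ∑ i, x i ∧ ρ = rho0 x b ∧ lam = lam0 x b := by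
  have hins : ∀ i : Fin m, univ.filter (fun k : Fin m => (k : ℕ) < (i : ℕ) + 1)
      = insert i (univ.filter (fun k : Fin m => (k : ℕ) < (i : ℕ))) := by
    intro i
    ext k
    simp only [mem_filter, mem_univ, true_and, mem_insert, Fin.ext_iff]
    omega
  have hG : ∀ j : Fin (m + 1), Fin.cases (motive := fun _ => ZMod d) a lam j
      = a - ∑ k ∈ univ.filter (fun k : Fin m => (k : ℕ) < (j : ℕ)), x k := by
    intro j
    induction j using Fin.induction with
    | zero => simp
    | succ i ih =>
        have hcs : Fin.cases (motive := fun _ => ZMod d) a lam i.castSucc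
            = lam i + x i := by
          rw [h2 i.castSucc, Fin.lastCases_castSucc, h1 i]
        rw [Fin.cases_succ]
        rw [hcs] at ih
        rw [Fin.val_succ, hins i, sum_insert (by simp)]
        rw [Fin.coe_castSucc] at ih
        linear_combination ih
  have hlast := (hG (Fin.last m)).symm.trans (h2 (Fin.last m))
  rw [Fin.lastCases_last] at hlast
  have huniv : univ.filter (fun k : Fin m => (k : ℕ) < ((Fin.last m : Fin (m+1)) : ℕ))
      = univ := by
    ext k; simp [Fin.val_last, k.isLt]
  rw [huniv] at hlast
  have ha : a = b + ∑ i, x i := by linear_combination hlast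
  have hlam : lam = lam0 x b := by
    funext i
    have h3 := hG i.succ
    rw [Fin.cases_succ, Fin.val_succ, hins i, sum_insert (by simp)] at h3
    have hsplit := Finset.sum_filter_add_sum_filter_not univ
      (fun k : Fin m => (k : ℕ) < (i : ℕ)) x
    have hnot : univ.filter (fun k : Fin m => ¬ (k : ℕ) < (i : ℕ))
        = univ.filter (fun k : Fin m => (i : ℕ) ≤ (k : ℕ)) := by
      ext k; simp only [mem_filter, mem_univ, true_and]; omega
    rw [hnot] at hsplit
    rw [lam0]
    have hle := filter_le_eq_insert i
    rw [hle, sum_insert (by simp)] at hsplit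
    linear_combination h3 + ha - hsplit
  have hrho : ρ = rho0 x b := by
    funext i
    rw [h1 i, hlam, rho0_eq]
  exact ⟨ha, hrho, hlam⟩

lemma term_support (x y : Fin m → ZMod d) (a b : ZMod d) (ρ lam : Fin m → ZMod d)
    (h : (starRingEnd ℂ) (∏ i, epr d (x i) (y i) (ρ i) (lam i)) *
      ∏ j : Fin (m + 1), epr d 0 0 (Fin.cases (motive := fun _ => ZMod d) a lam j)
        (Fin.lastCases (motive := fun _ => ZMod d) b ρ j) ≠ 0) :
    a = b + ∑ i, x i ∧ ρ = rho0 x b ∧ lam = lam0 x b := by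
  apply key_forward x a b ρ lam
  · intro i
    by_contra hne
    apply h
    rw [Finset.prod_eq_zero (mem_univ i) (by rw [epr, if_neg hne]), map_zero, zero_mul]
  · intro j
    by_contra hne
    apply h
    rw [Finset.prod_eq_zero (mem_univ j) (by
      rw [epr, if_neg (by rw [add_zero]; exact hne)]), mul_zero]

lemma S_formula (hd : 2 ≤ d) (x y : Fin m → ZMod d) (a b : ZMod d) :
    (∑ ρ : Fin m → ZMod d, ∑ lam : Fin m → ZMod d,
      (starRingEnd ℂ) (∏ i, epr d (x i) (y i) (ρ i) (lam i)) *
        ∏ j : Fin (m + 1), epr d 0 0 (Fin.cases (motive := fun _ => ZMod d) a lam j)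
          (Fin.lastCases (motive := fun _ => ZMod d) b ρ j))
    = ((Real.sqrt d : ℂ))⁻¹ ^ (2 * m) *
        χ d (-∑ i, y i * ∑ k ∈ univ.filter (fun k : Fin m => (i : ℕ) < (k : ℕ)), x k) *
        epr d (∑ i, x i) (-∑ i, y i) a b := by
  by_cases ha : a = b + ∑ i, x i
  · rw [Fintype.sum_eq_single (rho0 x b) (by
      intro ρ hρ
      apply Finset.sum_eq_zero
      intro lam _
      by_contra h
      exact hρ (term_support x y a b ρ lam h).2.1)]
    rw [Fintype.sum_eq_single (lam0 x b) (by
      intro lam hlam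
      by_contra h
      exact hlam (term_support x y a b _ lam h).2.2)]
    -- the equality of the two boundary-extended functions
    have h2 : ∀ j : Fin (m + 1),
        Fin.cases (motive := fun _ => ZMod d) a (lam0 x b) j
          = Fin.lastCases (motive := fun _ => ZMod d) b (rho0 x b) j := by
      intro j
      rw [cases_lam0 x a b ha j, lastCases_rho0 x b j]
    -- first product
    have hp1 : (∏ i, epr d (x i) (y i) (rho0 x b i) (lam0 x b i))
        = ((Real.sqrt d : ℂ))⁻¹ ^ m * χ d (∑ i, y i * lam0 x b i) := by
      rw [Finset.prod_congr rfl (fun i _ => by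
        rw [epr, if_pos (rho0_eq x b i)]; rfl : ∀ i ∈ univ,
          epr d (x i) (y i) (rho0 x b i) (lam0 x b i)
            = ((Real.sqrt d : ℂ))⁻¹ * χ d (y i * lam0 x b i))]
      rw [Finset.prod_mul_distrib, prod_const, χ_prod, card_univ, Fintype.card_fin]
    -- second product
    have hp2 : (∏ j : Fin (m + 1), epr d 0 0
          (Fin.cases (motive := fun _ => ZMod d) a (lam0 x b) j)
          (Fin.lastCases (motive := fun _ => ZMod d) b (rho0 x b) j))
        = ((Real.sqrt d : ℂ))⁻¹ ^ (m + 1) := by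
      rw [Finset.prod_congr rfl (fun j _ => by
        rw [epr, if_pos (by rw [add_zero]; exact h2 j)]
        simp : ∀ j ∈ univ, epr d 0 0
          (Fin.cases (motive := fun _ => ZMod d) a (lam0 x b) j)
          (Fin.lastCases (motive := fun _ => ZMod d) b (rho0 x b) j)
            = ((Real.sqrt d : ℂ))⁻¹)]
      rw [prod_const, card_univ, Fintype.card_fin]
    rw [hp1, hp2, map_mul, map_pow, map_inv₀, Complex.conj_ofReal, conj_χ]
    rw [epr, if_pos ha]
    have hphase : (∑ i, y i * lam0 x b i)
        = (∑ i, y i) * b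
          + ∑ i, y i * ∑ k ∈ univ.filter (fun k : Fin m => (i : ℕ) < (k : ℕ)), x k := by
      simp only [lam0, mul_add, Finset.sum_add_distrib, Finset.sum_mul]
    have hχ : χ d (-(∑ i, y i * lam0 x b i))
        = χ d (-∑ i, y i * ∑ k ∈ univ.filter (fun k : Fin m => (i : ℕ) < (k : ℕ)), x k)
          * χ d ((-∑ i, y i) * b) := by
      rw [← χ_add]
      congr 1
      rw [hphase]
      ring
    rw [hχ]
    rw [show ((ωc d) ^ ((-∑ i, y i) * b).val) = χ d ((-∑ i, y i) * b) from rfl]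
    ring
  · rw [Finset.sum_eq_zero (fun ρ _ => Finset.sum_eq_zero (fun lam _ => by
      by_contra h
      exact ha (term_support x y a b ρ lam h).1))]
    rw [epr, if_neg ha, mul_zero]

end chain



/-- Entanglement swapping along a chain. There are `m+1` pairs of qudit registers
`(Lᵢ, Rᵢ)`, each initialized in `|epr_d⟩ = (1/√d)∑ᵢ|ii⟩`. Bell-basis measurements on the `m`
pairs `(Rᵢ, Lᵢ₊₁)` (for `i = 1, …, m`) yield post-measurement states `(X^{xᵢ}⊗Z^{yᵢ})|epr_d⟩`
on those pairs. Then the post-measurement state of the remaining pair `(L₁, R_{m+1})` is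
`(X^{∑xᵢ} ⊗ Z^{-∑yᵢ})|epr_d⟩`: the projected global state is a nonzero multiple of
`(X^{∑x}⊗Z^{-∑y})|epr⟩_{L₁R_{m+1}}` tensored with the measured Bell states. -/
theorem entanglement_transfer_chain (d m : ℕ) [NeZero d] (hd : 2 ≤ d)
    (x y : Fin m → ZMod d) :
    let ω : ℂ := Complex.exp (2 * Real.pi * Complex.I / d)
    let eprXZ : ZMod d → ZMod d → ZMod d → ZMod d → ℂ := fun x' y' i j =>
      if i = j + x' then ((Real.sqrt d : ℂ))⁻¹ * ω ^ (y' * j).val else 0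
    -- the initial state: each pair (Lᵢ, Rᵢ) in |epr_d⟩
    let Ψ : (Fin (m + 1) → ZMod d) → (Fin (m + 1) → ZMod d) → ℂ := fun l r =>
      ∏ i : Fin (m + 1), eprXZ 0 0 (l i) (r i)
    -- the state after projecting each pair (Rᵢ, Lᵢ₊₁) onto (X^{xᵢ}⊗Z^{yᵢ})|epr_d⟩
    let P : (Fin (m + 1) → ZMod d) → (Fin (m + 1) → ZMod d) → ℂ := fun l r =>
      (∏ i : Fin m, eprXZ (x i) (y i) (r i.castSucc) (l i.succ)) *
        ∑ ρ : Fin m → ZMod d, ∑ lam : Fin m → ZMod d,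
          (starRingEnd ℂ) (∏ i : Fin m, eprXZ (x i) (y i) (ρ i) (lam i)) *
            Ψ (fun j => Fin.cases (l 0) (fun i => lam i) j)
              (fun j => Fin.lastCases (r (Fin.last m)) (fun i => ρ i) j)
    ∃ c : ℂ, c ≠ 0 ∧ ∀ l r : Fin (m + 1) → ZMod d,
      P l r = c * eprXZ (∑ i, x i) (-∑ i, y i) (l 0) (r (Fin.last m)) *
        ∏ i : Fin m, eprXZ (x i) (y i) (r i.castSucc) (l i.succ) := by
  intro ω eprXZ Ψ P
  refine ⟨((Real.sqrt d : ℂ))⁻¹ ^ (2 * m) *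
      χ d (-∑ i, y i * ∑ k ∈ Finset.univ.filter (fun k : Fin m => (i : ℕ) < (k : ℕ)), x k),
    mul_ne_zero (pow_ne_zero _ (inv_ne_zero (sqrtd_ne_zero d))) (χ_ne_zero d _), ?_⟩
  intro l r
  show (∏ i : Fin m, epr d (x i) (y i) (r i.castSucc) (l i.succ)) *
      (∑ ρ : Fin m → ZMod d, ∑ lam : Fin m → ZMod d,
        (starRingEnd ℂ) (∏ i, epr d (x i) (y i) (ρ i) (lam i)) *
          ∏ j : Fin (m + 1), epr d 0 0 (Fin.cases (motive := fun _ => ZMod d) (l 0) lam j)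
            (Fin.lastCases (motive := fun _ => ZMod d) (r (Fin.last m)) ρ j))
    = (((Real.sqrt d : ℂ))⁻¹ ^ (2 * m) *
        χ d (-∑ i, y i * ∑ k ∈ Finset.univ.filter (fun k : Fin m => (i : ℕ) < (k : ℕ)), x k))
        * epr d (∑ i, x i) (-∑ i, y i) (l 0) (r (Fin.last m)) *
        ∏ i : Fin m, epr d (x i) (y i) (r i.castSucc) (l i.succ)
  rw [S_formula hd x y (l 0) (r (Fin.last m))]
  ring
end

section
/- The maximum winning probability of classical (deterministic or shared-randomness) strategies in the Mermin GHZ game is exactly 3/4. -/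
/-- The classical value of the Mermin GHZ game is exactly 3/4: over all deterministic
strategies (triples of functions `fᵢ : {0,1} → {0,1}`), the maximum probability (over the
uniform query from `{(0,0,0),(0,1,1),(1,0,1),(1,1,0)}`) that `f₁(x₁) ⊕ f₂(x₂) ⊕ f₃(x₃)`
equals the target bit (0 on query `(0,0,0)`, 1 otherwise) is 3/4, and it is achieved. -/
theorem ghz_classical_value :
    IsGreatest
      {p : ℚ | ∃ f₁ f₂ f₃ : Bool → Bool,
        p = ((({(false, false, false), (false, true, true), (true, false, true),
                (true, true, false)} : Finset (Bool × Bool × Bool)).filter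
              (fun q => xor (f₁ q.1) (xor (f₂ q.2.1) (f₃ q.2.2))
                  = decide (q ≠ (false, false, false)))).card : ℚ) / 4}
      (3 / 4) := by
  constructor
  · refine ⟨id, id, not, ?_⟩
    have hc : (({(false, false, false), (false, true, true), (true, false, true),
                (true, true, false)} : Finset (Bool × Bool × Bool)).filter
              (fun q => xor (id q.1) (xor (id q.2.1) (not q.2.2))
                  = decide (q ≠ (false, false, false)))).card = 3 := by decide
    rw [hc]
    norm_num
  · rintro p ⟨f₁, f₂, f₃, rfl⟩
    have h : (({(false, false, false), (false, true, true), (true, false, true),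
                (true, true, false)} : Finset (Bool × Bool × Bool)).filter
              (fun q => xor (f₁ q.1) (xor (f₂ q.2.1) (f₃ q.2.2))
                  = decide (q ≠ (false, false, false)))).card ≤ 3 := by
      revert f₁ f₂ f₃; decide
    have h' : ((({(false, false, false), (false, true, true), (true, false, true),
                (true, true, false)} : Finset (Bool × Bool × Bool)).filter
              (fun q => xor (f₁ q.1) (xor (f₂ q.2.1) (f₃ q.2.2))
                  = decide (q ≠ (false, false, false)))).card : ℚ) ≤ 3 := by
      exact_mod_cast h
    linarith
end
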